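/- There exists a length L > 0 such that for every y₀ ∈ ℝ there is a zero s of Q with Re(s) > 0 and Im(s) ∈ (y₀, y₀ + L); that is, the imaginary parts of the zeros of Q form a relatively dense subset of ℝ. -/

import Mathlib

open Complex Metric Filter Set

/-- `Q(s) = 1 - 2∑_{k≥1} exp(-s√(k(k+2))/2)`. -/
noncomputable def Qfun (s : ℂ) : ℂ :=
  1 - 2 * ∑' k : ℕ,
    Complex.exp (-(s * (Real.sqrt (((k : ℝ) + 1) * (((k : ℝ) + 1) + 2)) : ℂ) / 2))

namespace Stmt16

noncomputable def w (k : ℕ) : ℝ := Real.sqrt (((k : ℝ) + 1) * (((k : ℝ) + 1) + 2))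

noncomputable def term (k : ℕ) (s : ℂ) : ℂ := Complex.exp (-(s * (w k : ℂ) / 2))

lemma Qfun_eq (s : ℂ) : Qfun s = 1 - 2 * ∑' k, term k s := rfl

lemma w_nonneg (k : ℕ) : 0 ≤ w k := Real.sqrt_nonneg _

lemma w_ge (k : ℕ) : (k : ℝ) + 1 ≤ w k := by
  have h : ((k : ℝ) + 1) ^ 2 ≤ ((k : ℝ) + 1) * (((k : ℝ) + 1) + 2) := by nlinarith [Nat.cast_nonneg (α := ℝ) k]
  have := Real.sqrt_le_sqrt h
  rwa [Real.sqrt_sq (by positivity)] at this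

lemma norm_term (k : ℕ) (s : ℂ) : ‖term k s‖ = Real.exp (-(s.re * w k / 2)) := by
  have h : -(s * (w k : ℂ) / 2) = ((-(w k / 2) : ℝ) : ℂ) * s := by push_cast; ring
  rw [term, h, Complex.norm_exp, Complex.re_ofReal_mul]
  ring_nf

lemma norm_term_le {δ : ℝ} (hδ : 0 < δ) {s : ℂ} (hs : δ ≤ s.re) (k : ℕ) :
    ‖term k s‖ ≤ Real.exp (-(δ/2)) ^ (k + 1) := by
  rw [norm_term, ← Real.exp_nat_mul]
  apply Real.exp_le_exp.2
  have h1 : δ * ((k : ℝ) + 1) ≤ s.re * w k := by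
    apply mul_le_mul hs (w_ge k) (by positivity) (le_trans hδ.le hs)
  push_cast
  nlinarith

lemma rho_lt_one {δ : ℝ} (hδ : 0 < δ) : Real.exp (-(δ/2)) < 1 :=
  Real.exp_lt_one_iff.2 (by linarith)

lemma summable_geom {δ : ℝ} (hδ : 0 < δ) : Summable (fun k : ℕ => Real.exp (-(δ/2)) ^ (k + 1)) := by
  have h := summable_geometric_of_lt_one (Real.exp_nonneg _) (rho_lt_one hδ)
  simpa [pow_succ, mul_comm] using h.mul_right (Real.exp (-(δ/2)))

lemma summable_norm_term {s : ℂ} (hs : 0 < s.re) : Summable fun k => ‖term k s‖ :=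
  Summable.of_nonneg_of_le (fun _ => norm_nonneg _)
    (fun k => norm_term_le hs le_rfl k) (summable_geom hs)

lemma summable_term {s : ℂ} (hs : 0 < s.re) : Summable fun k => term k s :=
  (summable_norm_term hs).of_norm


lemma tsum_geom' {δ : ℝ} (hδ : 0 < δ) :
    ∑' k : ℕ, Real.exp (-(δ/2)) ^ (k + 1)
      = Real.exp (-(δ/2)) * (1 - Real.exp (-(δ/2)))⁻¹ := by
  simp only [pow_succ, mul_comm _ (Real.exp (-(δ/2)))]
  rw [tsum_mul_left, tsum_geometric_of_lt_one (Real.exp_nonneg _) (rho_lt_one hδ)]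

lemma differentiable_term (k : ℕ) : Differentiable ℂ (term k) := by
  unfold term
  exact (((differentiable_id.mul_const _).div_const _).neg).cexp

lemma isOpen_halfplane (δ : ℝ) : IsOpen {s : ℂ | δ < s.re} :=
  isOpen_lt continuous_const Complex.continuous_re

lemma diffOn_tsum {δ : ℝ} (hδ : 0 < δ) :
    DifferentiableOn ℂ (fun s => ∑' k, term k s) {s : ℂ | δ < s.re} := by
  have huni : TendstoUniformlyOn (fun (t : Finset ℕ) x => ∑ n ∈ t, term n x)
      (fun x => ∑' n, term n x) atTop {s : ℂ | δ ≤ s.re} :=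
    tendstoUniformlyOn_tsum (summable_geom hδ) (fun n x hx => norm_term_le hδ hx n)
  have hloc : TendstoLocallyUniformlyOn (fun (t : Finset ℕ) x => ∑ n ∈ t, term n x)
      (fun x => ∑' n, term n x) atTop {s : ℂ | δ < s.re} :=
    (huni.tendstoLocallyUniformlyOn).mono (fun x hx => le_of_lt (Set.mem_setOf_eq ▸ hx))
  exact hloc.differentiableOn
    (Eventually.of_forall fun t =>
      (Differentiable.fun_sum fun k _ => differentiable_term k).differentiableOn)
    (isOpen_halfplane δ)

lemma diffOn_Qfun : DifferentiableOn ℂ Qfun {s : ℂ | 0 < s.re} := by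
  intro s hs
  have hs0 : (0:ℝ) < s.re := hs
  have hδ : (0:ℝ) < s.re / 2 := by linarith
  have h2 : s ∈ {z : ℂ | s.re / 2 < z.re} := by
    simp only [Set.mem_setOf_eq]; linarith
  have hdiff : DifferentiableAt ℂ (fun s => ∑' k, term k s) s :=
    (diffOn_tsum hδ).differentiableAt ((isOpen_halfplane _).mem_nhds h2)
  exact ((differentiableAt_const (1:ℂ)).sub
    ((differentiableAt_const (2:ℂ)).mul hdiff)).differentiableWithinAt

noncomputable def S (σ : ℝ) : ℝ := ∑' k : ℕ, Real.exp (-(σ * w k / 2))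

lemma term_real (k : ℕ) (σ : ℝ) :
    term k (σ : ℂ) = ((Real.exp (-(σ * w k / 2)) : ℝ) : ℂ) := by
  rw [term, Complex.ofReal_exp]
  congr 1
  push_cast
  ring

lemma summable_S {σ : ℝ} (hσ : 0 < σ) : Summable fun k => Real.exp (-(σ * w k / 2)) := by
  have h := summable_norm_term (s := (σ:ℂ)) (by simpa using hσ)
  have heq : (fun k => ‖term k (σ:ℂ)‖) = fun k => Real.exp (-(σ * w k / 2)) := by
    funext k; rw [norm_term]; norm_num
  rwa [heq] at h

lemma Qfun_real (σ : ℝ) : Qfun (σ : ℂ) = ((1 - 2 * S σ : ℝ) : ℂ) := by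
  have h : (∑' k : ℕ, term k (σ:ℂ)) = ((S σ : ℝ) : ℂ) := by
    rw [S, Complex.ofReal_tsum]
    exact tsum_congr (fun k => term_real k σ)
  rw [Qfun_eq, h]
  push_cast
  ring

lemma S_half : 1/2 < S (1/2) := by
  have hsum := summable_S (σ := 1/2) (by norm_num)
  have h0 : Real.exp (-(1/2 * w 0 / 2)) ≤ S (1/2) := Summable.le_tsum hsum 0 (fun _ _ => Real.exp_nonneg _)
  have hw0 : w 0 ≤ 2 := by
    rw [w]
    norm_num
    nlinarith [Real.sq_sqrt (by norm_num : (0:ℝ) ≤ 3), Real.sqrt_nonneg 3]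
  have hkey : 1/2 < Real.exp (-(1/2 * w 0 / 2)) := by
    have h1 : Real.exp (-(1/2 * w 0 / 2)) ≥ Real.exp (-(1/2 : ℝ)) := by
      apply Real.exp_le_exp.2
      nlinarith
    have h2 : Real.exp ((1/2 : ℝ)) < 2 := by
      nlinarith [Real.exp_one_lt_d9, Real.exp_pos (1/2:ℝ),
        (by rw [← Real.exp_add]; norm_num : Real.exp (1/2) * Real.exp (1/2) = Real.exp 1)]
    have h3 : Real.exp (-(1/2:ℝ)) = (Real.exp (1/2))⁻¹ := by
      rw [Real.exp_neg]
    rw [h3] at h1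
    have := Real.exp_pos (1/2:ℝ)
    calc (1:ℝ)/2 < (Real.exp (1/2))⁻¹ := by
          rw [lt_inv_comm₀] <;> nlinarith
      _ ≤ _ := h1
  linarith

lemma S_three : S 3 < 1/2 := by
  have hsum := summable_S (σ := 3) (by norm_num)
  have hle : S 3 ≤ ∑' k : ℕ, Real.exp (-((3:ℝ)/2)) ^ (k+1) := by
    apply Summable.tsum_le_tsum _ hsum (summable_geom (by norm_num))
    intro k
    have := norm_term_le (δ := 3) (by norm_num) (s := (3:ℂ)) (by norm_num) k
    rw [norm_term] at this
    simpa using this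
  rw [tsum_geom' (by norm_num : (0:ℝ) < 3)] at hle
  have hρ : Real.exp (-((3:ℝ)/2)) < 1/3 := by
    rw [Real.exp_neg]
    have h1 : (1 + 3/4 : ℝ) ≤ Real.exp (3/4) := by
      have := Real.add_one_le_exp (3/4 : ℝ); linarith
    have h2 : Real.exp ((3:ℝ)/2) = Real.exp (3/4) * Real.exp (3/4) := by
      rw [← Real.exp_add]; norm_num
    have h3 : (3:ℝ) < Real.exp (3/2) := by nlinarith
    rw [inv_lt_comm₀ (Real.exp_pos _) (by norm_num)] at *
    nlinarith
  have hρ0 := Real.exp_pos (-((3:ℝ)/2))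
  have h1 : (0:ℝ) < 1 - Real.exp (-((3:ℝ)/2)) := by linarith [rho_lt_one (by norm_num : (0:ℝ)<3)]
  calc S 3 ≤ _ := hle
    _ < 1/2 := by
        rw [mul_inv_lt_iff₀ h1]
        nlinarith

lemma exists_real_zero : ∃ σ : ℝ, 1/2 ≤ σ ∧ σ ≤ 3 ∧ Qfun (σ : ℂ) = 0 := by
  have hcont : ContinuousOn (fun σ : ℝ => 1 - 2 * S σ) (Icc (1/2) 3) := by
    have h1 : ContinuousOn (fun σ : ℝ => (σ : ℂ)) (Icc (1/2) 3) :=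
      Complex.continuous_ofReal.continuousOn
    have h2 : ContinuousOn Qfun {s : ℂ | 0 < s.re} := diffOn_Qfun.continuousOn
    have h3 : ContinuousOn (fun σ : ℝ => Qfun (σ:ℂ)) (Icc (1/2) 3) := by
      apply h2.comp h1
      intro x hx
      simp only [Set.mem_setOf_eq, Complex.ofReal_re]
      linarith [hx.1]
    have h4 : ContinuousOn (fun σ : ℝ => (Qfun (σ:ℂ)).re) (Icc (1/2) 3) :=
      Complex.continuous_re.comp_continuousOn h3
    apply h4.congr
    intro x hx
    show (1:ℝ) - 2 * S x = (Qfun (x:ℂ)).re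
    rw [Qfun_real]
    simp
  have hIVT := intermediate_value_Icc (by norm_num : (1/2:ℝ) ≤ 3) hcont
  have h0mem : (0:ℝ) ∈ Icc (1 - 2 * S (1/2)) (1 - 2 * S 3) := by
    constructor
    · linarith [S_half]
    · linarith [S_three]
  obtain ⟨σ, hσmem, hσ⟩ := hIVT h0mem
  refine ⟨σ, hσmem.1, hσmem.2, ?_⟩
  rw [Qfun_real]
  simp only at hσ
  rw [hσ]
  simp

noncomputable def E (k : ℕ) (t : ℝ) : ℂ := Complex.exp (-(Complex.I * t * w k / 2))

lemma term_vadd (k : ℕ) (s : ℂ) (t : ℝ) :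
    term k (s + Complex.I * t) = term k s * E k t := by
  rw [term, term, E, ← Complex.exp_add]
  congr 1
  ring

lemma E_add (k : ℕ) (x y : ℝ) : E k (x + y) = E k x * E k y := by
  rw [E, E, E, ← Complex.exp_add]
  congr 1
  push_cast
  ring

lemma norm_E (k : ℕ) (t : ℝ) : ‖E k t‖ = 1 := by
  rw [E, Complex.norm_exp]
  convert Real.exp_zero using 2
  simp [Complex.div_re, Complex.mul_re, Complex.mul_im]

lemma E_mul_inv (k : ℕ) (t : ℝ) : E k t * E k (-t) = 1 := by
  rw [← E_add]
  simp only [add_neg_cancel]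
  rw [E]
  push_cast
  simp [Complex.exp_zero]

/-- Almost periods are relatively dense. -/
lemma almost_periods (N : ℕ) (ε : ℝ) (hε : 0 < ε) :
    ∃ T : ℝ, 0 ≤ T ∧ ∀ a : ℝ, ∃ t : ℝ, |a - t| ≤ T ∧ ∀ k < N, ‖E k t - 1‖ < ε := by
  classical
  set ψ : ℝ → (Fin N → ℂ) := fun t k => E k (t : ℝ) with hψ
  set K : Set (Fin N → ℂ) := closure (Set.range ψ) with hK
  have hKsub : K ⊆ closedBall 0 1 := by
    apply closure_minimal _ isClosed_closedBall
    rintro - ⟨t, rfl⟩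
    rw [mem_closedBall, dist_zero_right]
    apply pi_norm_le_iff_of_nonneg (by norm_num) |>.2
    intro k
    rw [norm_E]
  have hKcomp : IsCompact K := (isCompact_closedBall _ _).of_isClosed_subset isClosed_closure hKsub
  have hcover : K ⊆ ⋃ t : ℝ, ball (ψ t) (ε/2) := by
    intro x hx
    rw [hK, Metric.mem_closure_iff] at hx
    obtain ⟨b, ⟨t, rfl⟩, hb⟩ := hx (ε/2) (by linarith)
    exact Set.mem_iUnion.2 ⟨t, by simpa [dist_comm] using hb⟩
  obtain ⟨F, hF⟩ := hKcomp.elim_finite_subcover (fun t : ℝ => ball (ψ t) (ε/2))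
    (fun _ => isOpen_ball) hcover
  refine ⟨∑ u ∈ F, |u|, Finset.sum_nonneg (fun u _ => abs_nonneg u), fun a => ?_⟩
  have ha : ψ a ∈ K := subset_closure ⟨a, rfl⟩
  obtain ⟨t₀, ht₀F, ht₀⟩ := Set.mem_iUnion₂.1 (hF ha)
  refine ⟨a - t₀, ?_, ?_⟩
  · rw [show a - (a - t₀) = t₀ by ring]
    exact Finset.single_le_sum (fun u _ => abs_nonneg u) ht₀F
  · intro k hk
    have hdist : dist (ψ a) (ψ t₀) < ε/2 := mem_ball.1 ht₀
    have hcomp : dist (E k a) (E k t₀) < ε/2 := by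
      have := dist_le_pi_dist (ψ a) (ψ t₀) ⟨k, hk⟩
      calc dist (E k a) (E k t₀) ≤ dist (ψ a) (ψ t₀) := this
        _ < ε/2 := hdist
    have hid : E k (a - t₀) - 1 = (E k a - E k t₀) * E k (-t₀) := by
      have h1 : E k (a - t₀) = E k a * E k (-t₀) := by
        rw [← E_add, sub_eq_add_neg]
      rw [h1, sub_mul, E_mul_inv]
    have : ‖E k (a - t₀) - 1‖ = ‖E k a - E k t₀‖ := by
      rw [hid, norm_mul, norm_E, mul_one]
    rw [this]
    calc ‖E k a - E k t₀‖ = dist (E k a) (E k t₀) := (dist_eq_norm _ _).symm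
      _ < ε/2 := hcomp
      _ < ε := by linarith

lemma norm_E_sub_le (k : ℕ) (t : ℝ) : ‖E k t - 1‖ ≤ 2 := by
  calc ‖E k t - 1‖ ≤ ‖E k t‖ + ‖(1:ℂ)‖ := norm_sub_le _ _
    _ = 2 := by rw [norm_E]; norm_num

/-- Uniform bound on vertical-translation differences of `Qfun`. -/
lemma diff_bound {N : ℕ} {ε δ : ℝ} (hδ : 0 < δ) (hε : 0 ≤ ε) {t : ℝ}
    (ht : ∀ k < N, ‖E k t - 1‖ ≤ ε) {s : ℂ} (hs : δ ≤ s.re) :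
    ‖Qfun (s + Complex.I * t) - Qfun s‖ ≤
      2 * (ε * (∑' k : ℕ, Real.exp (-(δ/2)) ^ (k + 1))
        + 2 * ∑' j : ℕ, Real.exp (-(δ/2)) ^ (j + N + 1)) := by
  have hs0 : 0 < s.re := lt_of_lt_of_le hδ hs
  have hs0' : 0 < (s + Complex.I * t).re := by
    simpa using hs0
  set ρ := Real.exp (-(δ/2)) with hρ
  set g : ℕ → ℝ := fun k => ρ ^ (k + 1) with hg
  have hgsum : Summable g := summable_geom hδ
  have hgnn : ∀ k, 0 ≤ g k := fun k => pow_nonneg (Real.exp_nonneg _) _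
  -- difference as a tsum
  have hdiff : Qfun (s + Complex.I * t) - Qfun s
      = -2 * ∑' k, term k s * (E k t - 1) := by
    rw [Qfun_eq, Qfun_eq]
    have h1 : (∑' k, term k (s + Complex.I * t)) = ∑' k, term k s * E k t :=
      tsum_congr fun k => term_vadd k s t
    have h2 : (∑' k, term k s * (E k t - 1))
        = (∑' k, term k s * E k t) - ∑' k, term k s := by
      rw [← Summable.tsum_sub]
      · exact tsum_congr fun k => by ring
      · have : Summable fun k => ‖term k s * E k t‖ := by
          apply Summable.of_nonneg_of_le (fun _ => norm_nonneg _) _ (summable_norm_term hs0)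
          intro k
          rw [norm_mul, norm_E, mul_one]
        exact this.of_norm
      · exact summable_term hs0
    rw [h1, h2]
    ring
  rw [hdiff, norm_mul]
  have hnn : ‖(-2 : ℂ)‖ = 2 := by norm_num
  rw [hnn]
  have hbound : ∀ k, ‖term k s * (E k t - 1)‖ ≤ (if k < N then ε * g k else 2 * g k) := by
    intro k
    rw [norm_mul]
    by_cases hk : k < N
    · simp only [hk, if_true]
      calc ‖term k s‖ * ‖E k t - 1‖ ≤ g k * ε :=
            mul_le_mul (by simpa [hg] using norm_term_le hδ hs k) (ht k hk) (norm_nonneg _)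
              (hgnn k)
        _ = ε * g k := mul_comm _ _
    · simp only [hk, if_false]
      rw [mul_comm]
      exact mul_le_mul (norm_E_sub_le k t) (by simpa [hg] using norm_term_le hδ hs k)
        (norm_nonneg _) (by norm_num)
  set b : ℕ → ℝ := fun k => if k < N then ε * g k else 2 * g k with hb
  have hbsum : Summable b := by
    apply Summable.of_nonneg_of_le _ _ ((hgsum.mul_left ε).add (hgsum.mul_left 2))
    · intro k; rw [hb]; dsimp only; split <;> positivity
    · intro k; rw [hb]; dsimp only; split
      · have : 0 ≤ 2 * g k := by positivity
        linarith
      · have : 0 ≤ ε * g k := by positivity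
        linarith
  have hsummand : Summable fun k => ‖term k s * (E k t - 1)‖ :=
    Summable.of_nonneg_of_le (fun _ => norm_nonneg _) hbound hbsum
  have h1 : ‖∑' k, term k s * (E k t - 1)‖ ≤ ∑' k, b k := by
    calc ‖∑' k, term k s * (E k t - 1)‖ ≤ ∑' k, ‖term k s * (E k t - 1)‖ :=
          norm_tsum_le_tsum_norm hsummand
      _ ≤ ∑' k, b k := Summable.tsum_le_tsum hbound hsummand hbsum
  have h2 : ∑' k, b k ≤ ε * (∑' k, g k) + 2 * ∑' j : ℕ, g (j + N) := by
    rw [← Summable.sum_add_tsum_nat_add N hbsum]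
    have h3 : ∑ k ∈ Finset.range N, b k ≤ ε * ∑' k, g k := by
      have : ∑ k ∈ Finset.range N, b k = ∑ k ∈ Finset.range N, ε * g k := by
        apply Finset.sum_congr rfl
        intro k hk
        rw [hb]
        simp [Finset.mem_range.1 hk]
      rw [this, ← Finset.mul_sum]
      apply mul_le_mul_of_nonneg_left _ hε
      exact Summable.sum_le_tsum _ (fun k _ => hgnn k) hgsum
    have h4 : ∑' j : ℕ, b (j + N) = 2 * ∑' j : ℕ, g (j + N) := by
      rw [← tsum_mul_left]
      apply tsum_congr
      intro j
      rw [hb]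
      simp [Nat.not_lt.2 (Nat.le_add_left N j)]
    linarith
  have hgN : (∑' j : ℕ, g (j + N)) = ∑' j : ℕ, ρ ^ (j + N + 1) := rfl
  rw [hgN] at h2
  have := le_trans h1 h2
  nlinarith [norm_nonneg (∑' k, term k s * (E k t - 1))]

/-- Minimum modulus principle: a strict minimum of `‖f‖` at the center forces a zero. -/
lemma exists_zero_of_norm_lt {f : ℂ → ℂ} {c : ℂ} {r : ℝ} (hr : 0 < r)
    (hd : DifferentiableOn ℂ f (closedBall c r))
    (hlt : ∀ z ∈ sphere c r, ‖f c‖ < ‖f z‖) :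
    ∃ z ∈ closedBall c r, f z = 0 := by
  by_contra hcon
  push_neg at hcon
  -- minimum of ‖f‖ on the sphere
  have hsne : (sphere c r).Nonempty := NormedSpace.sphere_nonempty.2 hr.le
  have hcont : ContinuousOn (fun z => ‖f z‖) (sphere c r) :=
    (hd.continuousOn.mono sphere_subset_closedBall).norm
  obtain ⟨z₀, hz₀s, hz₀min'⟩ := (isCompact_sphere c r).exists_isMinOn hsne hcont
  have hz₀min : ∀ z ∈ sphere c r, ‖f z₀‖ ≤ ‖f z‖ := fun z hz => hz₀min' hz
  set m := ‖f z₀‖ with hm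
  have hmlt : ‖f c‖ < m := hlt z₀ hz₀s
  have hm0 : 0 < m := lt_of_le_of_lt (norm_nonneg _) hmlt
  -- inverse function
  have hne : ∀ z ∈ closedBall c r, f z ≠ 0 := hcon
  have hdc : DiffContOnCl ℂ (fun z => (f z)⁻¹) (ball c r) := by
    constructor
    · exact ((hd.mono ball_subset_closedBall).inv
        (fun z hz => hne z (ball_subset_closedBall hz)))
    · rw [closure_ball c hr.ne']
      exact hd.continuousOn.inv₀ hne
  have hkey : ‖(f c)⁻¹‖ ≤ m⁻¹ := by
    apply Complex.norm_le_of_forall_mem_frontier_norm_le isBounded_ball hdc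
    · intro z hz
      rw [frontier_ball c hr.ne'] at hz
      rw [norm_inv]
      exact inv_anti₀ hm0 (hz₀min z hz)
    · rw [closure_ball c hr.ne']
      exact mem_closedBall_self hr.le
  rw [norm_inv] at hkey
  have hfc0 : 0 < ‖f c‖ := norm_pos_iff.2 (hne c (mem_closedBall_self hr.le))
  have : m ≤ ‖f c‖ := by
    rwa [inv_le_inv₀ hfc0 hm0] at hkey
  linarith

end Stmt16

open Complex Metric Filter Set Topology Stmt16

/-- there is a length `L > 0` such that every open interval `(y₀, y₀ + L)`
contains the imaginary part of some zero of `Q` in the right half-plane; i.e. the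
imaginary parts of the zeros of `Q` form a relatively dense subset of `ℝ`. -/
theorem stmt_16 :
    ∃ L : ℝ, 0 < L ∧ ∀ y₀ : ℝ, ∃ s : ℂ,
      0 < s.re ∧ Qfun s = 0 ∧ y₀ < s.im ∧ s.im < y₀ + L := by
  classical
  obtain ⟨σ, hσlo, hσhi, hσzero⟩ := exists_real_zero
  set U : Set ℂ := {s : ℂ | 0 < s.re} with hU
  have hUopen : IsOpen U := isOpen_halfplane 0
  have hA : AnalyticOnNhd ℂ Qfun U := diffOn_Qfun.analyticOnNhd hUopen
  have hσU : (σ:ℂ) ∈ U := by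
    simp only [hU, Set.mem_setOf_eq, Complex.ofReal_re]; linarith
  have hQ3 : Qfun ((3:ℝ):ℂ) ≠ 0 := by
    rw [Qfun_real]
    simp only [ne_eq, Complex.ofReal_eq_zero]
    have := S_three
    intro h
    linarith
  -- punctured nonvanishing near σ
  have hne : ∀ᶠ z in nhdsWithin (σ:ℂ) {(σ:ℂ)}ᶜ, Qfun z ≠ 0 := by
    rcases (hA (σ:ℂ) hσU).eventually_eq_zero_or_eventually_ne_zero with h | h
    · exfalso
      have heq : EqOn Qfun 0 U :=
        hA.eqOn_zero_of_preconnected_of_eventuallyEq_zero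
          ((convex_halfSpace_re_gt 0).isPreconnected) hσU (h.mono fun z hz => hz)
      have h3U : ((3:ℝ):ℂ) ∈ U := by
        simp only [hU, Set.mem_setOf_eq, Complex.ofReal_re]; norm_num
      exact hQ3 (heq h3U)
    · exact h
  rw [eventually_nhdsWithin_iff, Metric.eventually_nhds_iff] at hne
  obtain ⟨r₁, hr₁pos, hr₁⟩ := hne
  -- radius
  set r : ℝ := min (r₁/2) (1/4) with hr
  have hrpos : 0 < r := lt_min (by linarith) (by norm_num)
  have hrle : r ≤ 1/4 := min_le_right _ _
  have hrlt : r < r₁ := lt_of_le_of_lt (min_le_left _ _) (by linarith)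
  set δ : ℝ := σ - r with hδdef
  have hδpos : 0 < δ := by
    have : r ≤ 1/4 := hrle
    simp only [hδdef]; linarith
  -- closed ball around σ inside U
  have hball_sub : ∀ c : ℂ, c.re = σ → closedBall c r ⊆ U := by
    intro c hc z hz
    have h1 : |(z - c).re| ≤ ‖z - c‖ := Complex.abs_re_le_norm _
    have h2 : ‖z - c‖ ≤ r := by rwa [← dist_eq_norm, ← mem_closedBall]
    have h3 : |z.re - σ| ≤ r := by
      rw [Complex.sub_re, hc] at h1; linarith [h1.trans h2]
    have := abs_le.1 h3
    simp only [hU, Set.mem_setOf_eq]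
    linarith [this.1]
  -- re bounds on closed ball
  have hre_ball : ∀ c : ℂ, c.re = σ → ∀ z ∈ closedBall c r, δ ≤ z.re := by
    intro c hc z hz
    have h1 : |(z - c).re| ≤ ‖z - c‖ := Complex.abs_re_le_norm _
    have h2 : ‖z - c‖ ≤ r := by rwa [← dist_eq_norm, ← mem_closedBall]
    have h3 := abs_le.1 (h1.trans h2)
    rw [Complex.sub_re, hc] at h3
    simp only [hδdef]
    linarith [h3.1]
  -- minimum on the sphere around σ
  have hsphere_sub : sphere (σ:ℂ) r ⊆ closedBall (σ:ℂ) r := sphere_subset_closedBall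
  have hsne : (sphere (σ:ℂ) r).Nonempty := NormedSpace.sphere_nonempty.2 hrpos.le
  have hcontQ : ContinuousOn Qfun U := diffOn_Qfun.continuousOn
  have hσre : ((σ:ℂ)).re = σ := Complex.ofReal_re σ
  have hcont_sphere : ContinuousOn (fun z => ‖Qfun z‖) (sphere (σ:ℂ) r) :=
    ((hcontQ.mono ((hsphere_sub).trans (hball_sub _ hσre))).norm)
  obtain ⟨z₀, hz₀s, hz₀min'⟩ := (isCompact_sphere (σ:ℂ) r).exists_isMinOn hsne hcont_sphere
  have hz₀min : ∀ z ∈ sphere (σ:ℂ) r, ‖Qfun z₀‖ ≤ ‖Qfun z‖ := fun z hz => hz₀min' hz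
  set m : ℝ := ‖Qfun z₀‖ with hm
  have hmpos : 0 < m := by
    have hz₀ne : Qfun z₀ ≠ 0 := by
      apply hr₁
      · rw [mem_sphere] at hz₀s
        rw [hz₀s]; exact hrlt
      · simp only [Set.mem_compl_iff, Set.mem_singleton_iff]
        intro h
        rw [mem_sphere, h] at hz₀s
        simp at hz₀s
        linarith
    simpa [hm] using norm_pos_iff.2 hz₀ne
  -- geometric series constants
  set ρ : ℝ := Real.exp (-(δ/2)) with hρ
  set G : ℝ := ∑' k : ℕ, ρ ^ (k + 1) with hG
  have hGnn : 0 ≤ G := tsum_nonneg fun k => pow_nonneg (Real.exp_nonneg _) _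
  -- choose N with small tail
  have htail : Tendsto (fun i => ∑' k : ℕ, ρ ^ (k + i + 1)) atTop (𝓝 0) := by
    have := tendsto_sum_nat_add (f := fun k => ρ ^ (k + 1))
    exact this
  obtain ⟨N, hN⟩ := ((tendsto_order.1 htail).2 (m/16) (by positivity)).exists
  set tailN : ℝ := ∑' j : ℕ, ρ ^ (j + N + 1) with htailN
  have htail_nn : 0 ≤ tailN := tsum_nonneg fun k => pow_nonneg (Real.exp_nonneg _) _
  -- choose ε
  set ε : ℝ := m / (16 * (G + 1)) with hε
  have hεpos : 0 < ε := by positivity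
  have hεG : ε * G ≤ m / 16 := by
    rw [hε, div_mul_eq_mul_div, div_le_div_iff₀ (by positivity) (by norm_num)]
    nlinarith
  set B : ℝ := 2 * (ε * G + 2 * tailN) with hB
  have hBlt : B < m / 2 := by
    rw [hB]
    nlinarith [hN]
  have hBnn : 0 ≤ B := by positivity
  -- almost periods
  obtain ⟨T, hT0, hT⟩ := almost_periods N ε hεpos
  refine ⟨2*T + 2*r + 1, by positivity, fun y₀ => ?_⟩
  obtain ⟨t, htT, htE⟩ := hT (y₀ + r + 1/2 + T)
  have htE' : ∀ k < N, ‖E k t - 1‖ ≤ ε := fun k hk => (htE k hk).le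
  set c : ℂ := (σ:ℂ) + Complex.I * t with hc
  have hcre : c.re = σ := by simp [hc]
  have hcim : c.im = t := by simp [hc]
  -- bound ‖Qfun c‖
  have hQc : ‖Qfun c‖ ≤ B := by
    have := diff_bound hδpos hεpos.le htE' (s := (σ:ℂ)) (by rw [hσre]; simp [hδdef]; linarith [hrpos])
    rw [hσzero] at this
    simpa [hc, hB, hρ, hG, htailN] using this
  -- sphere lower bound
  have hsphere_lb : ∀ z ∈ sphere c r, m - B ≤ ‖Qfun z‖ := by
    intro z hz
    set z' : ℂ := z - Complex.I * t with hz'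
    have hz's : z' ∈ sphere (σ:ℂ) r := by
      rw [mem_sphere] at hz ⊢
      rw [hz', hc] at *
      have : z - Complex.I * t - σ = z - (σ + Complex.I * t) := by ring
      rw [dist_eq_norm, this, ← dist_eq_norm]
      exact hz
    have hz're : δ ≤ z'.re := hre_ball _ hσre z' (hsphere_sub hz's)
    have hdb := diff_bound hδpos hεpos.le htE' (s := z') hz're
    have hzz' : z' + Complex.I * t = z := by rw [hz']; ring
    rw [hzz'] at hdb
    have h1 : ‖Qfun z'‖ - ‖Qfun z - Qfun z'‖ ≤ ‖Qfun z‖ := by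
      have := norm_sub_norm_le (Qfun z) (Qfun z')  -- wrong direction? use triangle
      have h2 : ‖Qfun z'‖ ≤ ‖Qfun z‖ + ‖Qfun z - Qfun z'‖ := by
        calc ‖Qfun z'‖ = ‖Qfun z - (Qfun z - Qfun z')‖ := by ring_nf
          _ ≤ ‖Qfun z‖ + ‖Qfun z - Qfun z'‖ := norm_sub_le _ _
      linarith
    have hmz' : m ≤ ‖Qfun z'‖ := hz₀min z' hz's
    have hdbB : ‖Qfun z - Qfun z'‖ ≤ B := by
      simpa [hB, hρ, hG, htailN] using hdb
    linarith
  -- apply min modulus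
  have hdiffball : DifferentiableOn ℂ Qfun (closedBall c r) :=
    diffOn_Qfun.mono (hball_sub c hcre)
  have hlt : ∀ z ∈ sphere c r, ‖Qfun c‖ < ‖Qfun z‖ := by
    intro z hz
    have := hsphere_lb z hz
    linarith [hBlt, hQc]
  obtain ⟨z, hzball, hzzero⟩ := exists_zero_of_norm_lt hrpos hdiffball hlt
  refine ⟨z, ?_, hzzero, ?_, ?_⟩
  · have := hre_ball c hcre z hzball
    linarith
  · -- z.im > y₀
    have h1 : |(z - c).im| ≤ ‖z - c‖ := Complex.abs_im_le_norm _
    have h2 : ‖z - c‖ ≤ r := by rwa [← dist_eq_norm, ← mem_closedBall]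
    have h3 := abs_le.1 (h1.trans h2)
    rw [Complex.sub_im, hcim] at h3
    have habs := abs_le.1 htT
    have htlo : y₀ + r + 1/2 ≤ t := by linarith [habs.2]
    linarith [h3.1]
  · have h1 : |(z - c).im| ≤ ‖z - c‖ := Complex.abs_im_le_norm _
    have h2 : ‖z - c‖ ≤ r := by rwa [← dist_eq_norm, ← mem_closedBall]
    have h3 := abs_le.1 (h1.trans h2)
    rw [Complex.sub_im, hcim] at h3
    have habs := abs_le.1 htT
    have hthi : t ≤ y₀ + r + 1/2 + 2*T := by linarith [habs.1]
    linarith [h3.2]
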